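/- If G is a minimally 2-connected simple graph, then the subgraph of G induced by the set of vertices of degree exceeding 2 is a forest. -/

import Mathlib

namespace SimpleGraph

variable {V : Type*}

/-- A simple graph is `2`-connected if it has at least `3` vertices and
deleting any single vertex leaves a connected graph. -/
def TwoConnected [Fintype V] (G : SimpleGraph V) : Prop :=
  3 ≤ Fintype.card V ∧ ∀ x : V, (G.induce {y | y ≠ x}).Connected

/-- A simple graph is minimally `2`-connected if it is `2`-connected and the deletion of
any edge yields a graph that is not `2`-connected. -/
def MinimallyTwoConnected [Fintype V] (G : SimpleGraph V) : Prop :=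
  G.TwoConnected ∧ ∀ e ∈ G.edgeSet, ¬ (G.deleteEdges {e}).TwoConnected

/-- Two `u`–`v` walks are internally disjoint if they share no vertex besides `u` and `v`
and share no edge. -/
def IntDisjoint (G : SimpleGraph V) {u v : V} (p q : G.Walk u v) : Prop :=
  (∀ w ∈ p.support, w ∈ q.support → w = u ∨ w = v) ∧ ∀ e ∈ p.edges, e ∉ q.edges

/-- `κ_G(u,v)`: the maximum number of pairwise internally disjoint `u`–`v` paths in `G`. -/
noncomputable def kappa (G : SimpleGraph V) (u v : V) : ℕ :=
  sSup {k | ∃ p : Fin k → G.Walk u v, (∀ i, (p i).IsPath) ∧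
    ∀ i j, i ≠ j → G.IntDisjoint (p i) (p j)}

/-- The average connectivity of `G`: the average of `κ_G(u,v)` over all unordered pairs of
distinct vertices (computed here as the sum over ordered pairs divided by `n(n-1)`). -/
noncomputable def avgKappa [Fintype V] [DecidableEq V] (G : SimpleGraph V) : ℚ :=
  (∑ p ∈ Finset.univ.offDiag, (G.kappa p.1 p.2 : ℚ)) /
    ((Fintype.card V : ℚ) * ((Fintype.card V : ℚ) - 1))

end SimpleGraph


namespace Halin
open SimpleGraph

variable {V : Type*}

/-- `a` and `b` are joined by a walk in `H` avoiding the vertex `u`. -/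
def Avoid (H : SimpleGraph V) (u a b : V) : Prop := ∃ w : H.Walk a b, u ∉ w.support

namespace Avoid

variable {H : SimpleGraph V} {u a b c : V}

lemma ne_left (h : Avoid H u a b) : a ≠ u := by
  obtain ⟨w, hw⟩ := h; rintro rfl; exact hw w.start_mem_support

lemma ne_right (h : Avoid H u a b) : b ≠ u := by
  obtain ⟨w, hw⟩ := h; rintro rfl; exact hw w.end_mem_support

protected lemma refl (h : a ≠ u) : Avoid H u a a := ⟨Walk.nil, by simpa using h.symm⟩

protected lemma symm (h : Avoid H u a b) : Avoid H u b a := by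
  obtain ⟨w, hw⟩ := h; exact ⟨w.reverse, by simpa using hw⟩

protected lemma trans (h : Avoid H u a b) (h' : Avoid H u b c) : Avoid H u a c := by
  obtain ⟨w, hw⟩ := h; obtain ⟨w', hw'⟩ := h'
  exact ⟨w.append w', by
    rw [Walk.mem_support_append_iff]; rintro (hh | hh) <;> [exact hw hh; exact hw' hh]⟩

lemma step (h : Avoid H u a b) (hadj : H.Adj b c) (hc : c ≠ u) : Avoid H u a c :=
  h.trans ⟨hadj.toWalk, by simp [Ne.symm h.ne_right, Ne.symm hc]⟩

end Avoid

lemma avoid_of_adj {H : SimpleGraph V} {u a b : V} (hadj : H.Adj a b) (ha : a ≠ u) (hb : b ≠ u) :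
    Avoid H u a b :=
  (Avoid.refl ha).step hadj hb

lemma avoid_of_mem_support [DecidableEq V] {H : SimpleGraph V} {u a b v : V} (W : H.Walk a b)
    (hu : u ∉ W.support) (hv : v ∈ W.support) : Avoid H u a v :=
  ⟨W.takeUntil v hv, fun hh => hu (W.support_takeUntil_subset hv hh)⟩

/-- Closure induction along a walk avoiding `u`. -/
lemma walk_closure {H : SimpleGraph V} {u : V} {S : Set V} :
    ∀ {a b : V} (W : H.Walk a b), u ∉ W.support → a ∈ S →
      (∀ v z, v ∈ S → v ∈ W.support → z ∈ W.support → z ≠ u → H.Adj v z → z ∈ S) → b ∈ S := by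
  intro a b W
  induction W with
  | nil => intro _ ha _; exact ha
  | @cons a a' b hadj W ih =>
    intro hu ha hcl
    have hu' : u ∉ W.support := fun hh => hu (by simp [hh])
    have ha' : a' ∈ S := hcl a a' ha (by simp) (by simp) (fun hh => hu' (hh ▸ W.start_mem_support)) hadj
    exact ih hu' ha' (fun v z hv hvs hzs hz hadj' =>
      hcl v z hv (by simp [hvs]) (by simp [hzs]) hz hadj')

/-- A walk from outside `S` into `S` has a crossing edge. -/
lemma exists_crossing {H : SimpleGraph V} {S : Set V} :
    ∀ {a b : V} (_ : H.Walk a b), a ∉ S → b ∈ S → ∃ v z, H.Adj v z ∧ v ∉ S ∧ z ∈ S := by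
  intro a b W
  induction W with
  | nil => intro ha hb; exact absurd hb ha
  | @cons a a' b hadj W ih =>
    intro ha hb
    by_cases h' : a' ∈ S
    · exact ⟨a, a', hadj, ha, h'⟩
    · exact ih h' hb


lemma reach_induce {H : SimpleGraph V} {s : Set V} :
    ∀ {a b : V} (W : H.Walk a b) (hall : ∀ z ∈ W.support, z ∈ s),
      (H.induce s).Reachable ⟨a, hall a W.start_mem_support⟩ ⟨b, hall b W.end_mem_support⟩ := by
  intro a b W
  induction W with
  | nil => intro _; rfl
  | @cons a a' b hadj W ih =>
    intro hall
    have hall' : ∀ z ∈ W.support, z ∈ s := fun z hz => hall z (by simp [hz])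
    have h1 : (H.induce s).Adj ⟨a, hall a (by simp)⟩ ⟨a', hall' a' W.start_mem_support⟩ := by
      simpa using hadj
    exact h1.reachable.trans (ih hall')

lemma avoid_of_connected {H : SimpleGraph V} {u a b : V}
    (h : (H.induce {y | y ≠ u}).Connected) (ha : a ≠ u) (hb : b ≠ u) : Avoid H u a b := by
  obtain ⟨W⟩ := h.preconnected ⟨a, ha⟩ ⟨b, hb⟩
  refine ⟨W.map (Embedding.induce {y | y ≠ u}).toHom, ?_⟩
  erw [Walk.support_map]
  intro hu
  obtain ⟨⟨z, hz⟩, -, hzz⟩ := List.mem_map.mp hu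
  exact hz hzz

lemma connected_of_avoid {H : SimpleGraph V} {u : V} (hne : ∃ v : V, v ≠ u)
    (h : ∀ a b : V, a ≠ u → b ≠ u → Avoid H u a b) : (H.induce {y | y ≠ u}).Connected := by
  obtain ⟨v, hv⟩ := hne
  have : Nonempty ({y | y ≠ u} : Set V) := ⟨⟨v, hv⟩⟩
  refine Connected.mk ?_
  rintro ⟨a, ha⟩ ⟨b, hb⟩
  obtain ⟨W, hW⟩ := h a b ha hb
  have hall : ∀ z ∈ W.support, z ∈ {y | y ≠ u} := fun z hz => by
    rintro rfl; exact hW hz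
  exact reach_induce W hall


/-- Deleting an edge at `p` does not change the graph induced away from `p`. -/
lemma induce_deleteEdges_eq {G : SimpleGraph V} {p q : V} {x : V} (hx : x = p ∨ x = q) :
    (G.deleteEdges {s(p, q)}).induce {y | y ≠ x} = G.induce {y | y ≠ x} := by
  ext ⟨a, ha⟩ ⟨b, hb⟩
  simp only [comap_adj, Function.Embedding.coe_subtype, deleteEdges_adj, Set.mem_singleton_iff]
  constructor
  · rintro ⟨h1, -⟩; exact h1
  · intro h1
    refine ⟨h1, fun hh => ?_⟩
    rw [Sym2.eq_iff] at hh
    rcases hx with rfl | rfl <;> rcases hh with ⟨rfl, rfl⟩ | ⟨rfl, rfl⟩ <;>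
      first | exact ha rfl | exact hb rfl

/-- If `p q` are joined avoiding `u` in `G - pq`, then avoidance in `G` transfers to `G - pq`. -/
lemma avoid_delete_of_avoid {G : SimpleGraph V} {p q u a b : V}
    (hD : Avoid (G.deleteEdges {s(p, q)}) u p q) (hab : Avoid G u a b) :
    Avoid (G.deleteEdges {s(p, q)}) u a b := by
  have hane : a ≠ u := Avoid.ne_left hab
  obtain ⟨W, hW⟩ := hab
  have hmem : b ∈ {z | Avoid (G.deleteEdges {s(p, q)}) u a z} := by
    refine walk_closure W hW (Avoid.refl hane) ?_
    intro v z hv _ _ hz hadj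
    by_cases he : s(v, z) = s(p, q)
    · rw [Sym2.eq_iff] at he
      rcases he with ⟨rfl, rfl⟩ | ⟨rfl, rfl⟩
      · exact hv.trans hD
      · exact hv.trans hD.symm
    · exact Avoid.step hv (by simp [hadj, he]) hz
  exact hmem

/-- Key separation lemma: removing an edge of `G` leaves some vertex `u` (distinct from the
endpoints) separating the endpoints. -/
lemma exists_cutvertex [Fintype V] {G : SimpleGraph V} (h : G.MinimallyTwoConnected)
    {p q : V} (hadj : G.Adj p q) :
    ∃ u, u ≠ p ∧ u ≠ q ∧ ¬ Avoid (G.deleteEdges {s(p, q)}) u p q := by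
  have hnt := h.2 s(p, q) hadj
  rw [TwoConnected, not_and_or] at hnt
  rcases hnt with hc | hc
  · exact absurd h.1.1 hc
  · push_neg at hc
    obtain ⟨u, hu⟩ := hc
    have hup : u ≠ p := by
      rintro rfl
      rw [induce_deleteEdges_eq (Or.inl rfl)] at hu
      exact hu (h.1.2 u)
    have huq : u ≠ q := by
      rintro rfl
      rw [induce_deleteEdges_eq (Or.inr rfl)] at hu
      exact hu (h.1.2 u)
    refine ⟨u, hup, huq, fun hD => ?_⟩
    refine hu (connected_of_avoid ⟨p, hup.symm⟩ ?_)
    intro a b ha hb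
    exact avoid_delete_of_avoid hD (avoid_of_connected (h.1.2 u) ha hb)


/-- If a walk with nodup support starts at `a` and contains an edge `s(a,y)`, that edge is
its first edge. -/
lemma first_edge {H : SimpleGraph V} {a t y : V} (W : H.Walk a t) (hnd : W.support.Nodup)
    (he : s(a, y) ∈ W.edges) :
    ∃ (h : H.Adj a y) (W' : H.Walk y t), W = Walk.cons h W' := by
  cases W with
  | nil => simp at he
  | @cons _ c _ h₀ W₀ =>
    rw [Walk.edges_cons, List.mem_cons] at he
    rw [Walk.support_cons, List.nodup_cons] at hnd
    rcases he with he | he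
    · rw [Sym2.eq_iff] at he
      rcases he with ⟨-, rfl⟩ | ⟨rfl, rfl⟩
      · exact ⟨h₀, W₀, rfl⟩
      · exact absurd W₀.start_mem_support hnd.1
    · exact absurd (W₀.fst_mem_support_of_mem_edges he) hnd.1

/-- From a cycle containing edge `s(x,y)`, extract the path from `x` to `y` that goes the
other way around. -/
lemma exists_path_off_edge [DecidableEq V] {H : SimpleGraph V} {t x y : V} (C : H.Walk t t)
    (hC : C.IsCycle) (he : s(x, y) ∈ C.edges) :
    ∃ P : H.Walk x y, P.edges.Nodup ∧ s(x, y) ∉ P.edges ∧ ∀ g ∈ P.edges, g ∈ C.edges := by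
  have hx : x ∈ C.support := C.fst_mem_support_of_mem_edges he
  set C' := C.rotate x hx with hC'def
  have hC' : C'.IsCycle := hC.rotate hx
  have hrot : C'.edges ~r C.edges := C.rotate_edges x hx
  have hsub : ∀ g ∈ C'.edges, g ∈ C.edges := fun g hg => hrot.perm.mem_iff.mp hg
  have he' : s(x, y) ∈ C'.edges := hrot.perm.mem_iff.mpr he
  clear_value C'
  cases C' with
  | nil => simp at he'
  | @cons _ b _ hadj q =>
    have hnd : q.support.Nodup := by
      have := hC'.support_nodup
      rwa [Walk.support_cons, List.tail_cons] at this
    have hednd : (Walk.cons hadj q).edges.Nodup := hC'.edges_nodup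
    rw [Walk.edges_cons, List.nodup_cons] at hednd
    by_cases hxb : s(x, y) = s(x, b)
    · -- y = b; other arc is q reversed
      have hyb : y = b := by
        rw [Sym2.eq_iff] at hxb
        rcases hxb with ⟨-, h2⟩ | ⟨h1, h2⟩
        · exact h2
        · exact h2.trans h1
      subst hyb
      refine ⟨q.reverse, by simpa using hednd.2, ?_, fun g hg => hsub g (by simp at hg; simp [hg])⟩
      rw [Walk.edges_reverse, List.mem_reverse]
      exact hxb ▸ hednd.1
    · have heq : s(x, y) ∈ q.edges := by
        rcases (List.mem_cons).mp he' with h1 | h1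
        · exact absurd h1 hxb
        · exact h1
      have heqr : s(x, y) ∈ q.reverse.edges := by rwa [Walk.edges_reverse, List.mem_reverse]
      have hndr : q.reverse.support.Nodup := by rwa [Walk.support_reverse, List.nodup_reverse]
      obtain ⟨hxy, W', hW'⟩ := first_edge q.reverse hndr heqr
      -- cycle: x -b- ... ; q.reverse = cons (x~y) W', W' : y ⇝ b
      refine ⟨Walk.cons hadj W'.reverse, ?_, ?_, ?_⟩
      · rw [Walk.edges_cons, List.nodup_cons, Walk.edges_reverse, List.nodup_reverse]
        have hW'sub : ∀ g ∈ W'.edges, g ∈ q.edges := by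
          intro g hg
          have : g ∈ q.reverse.edges := by rw [hW']; simp [hg]
          rwa [Walk.edges_reverse, List.mem_reverse] at this
        have hqnd : q.reverse.edges.Nodup := by
          rw [Walk.edges_reverse, List.nodup_reverse]; exact hednd.2
        rw [hW', Walk.edges_cons, List.nodup_cons] at hqnd
        exact ⟨fun hh => hednd.1 (hW'sub _ (by rwa [List.mem_reverse] at hh)), hqnd.2⟩
      · rw [Walk.edges_cons, List.mem_cons, Walk.edges_reverse, List.mem_reverse]
        rintro (hh | hh)
        · exact hxb hh
        · have hqnd : q.reverse.edges.Nodup := by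
            rw [Walk.edges_reverse, List.nodup_reverse]; exact hednd.2
          rw [hW', Walk.edges_cons, List.nodup_cons] at hqnd
          exact hqnd.1 hh
      · intro g hg
        rw [Walk.edges_cons, List.mem_cons] at hg
        rcases hg with rfl | hg
        · exact hsub _ (by simp)
        · rw [Walk.edges_reverse, List.mem_reverse] at hg
          have : g ∈ q.reverse.edges := by rw [hW']; simp [hg]
          rw [Walk.edges_reverse, List.mem_reverse] at this
          exact hsub _ (by simp [this])


/-- Vertices on a walk to `w` that hits `w` only once (at the end) are reachable avoiding `w`. -/
lemma avoid_of_count_one [DecidableEq V] {H : SimpleGraph V} {x w v : V} (W : H.Walk x w)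
    (hcount : W.support.count w = 1) (hv : v ∈ W.support) (hvw : v ≠ w) : Avoid H w x v := by
  refine ⟨W.takeUntil v hv, fun hmem => ?_⟩
  have hspec := W.take_spec hv
  have hsupp : W.support = (W.takeUntil v hv).support ++ (W.dropUntil v hv).support.tail := by
    conv_lhs => rw [← hspec]
    rw [Walk.support_append]
  have hwd : w ∈ (W.dropUntil v hv).support.tail := by
    have h1 : w ∈ (W.dropUntil v hv).support := Walk.end_mem_support _
    have h2 := (W.dropUntil v hv).support_eq_cons
    rw [h2] at h1
    rcases List.mem_cons.mp h1 with h3 | h3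
    · exact absurd h3.symm hvw
    · rw [h2]; simpa using h3
  have : 2 ≤ W.support.count w := by
    rw [hsupp, List.count_append]
    have c1 : 1 ≤ List.count w (W.takeUntil v hv).support := List.one_le_count_iff.mpr hmem
    have c2 : 1 ≤ List.count w (W.dropUntil v hv).support.tail := List.one_le_count_iff.mpr hwd
    omega
  omega

lemma degree_le_two_of_forall {G : SimpleGraph V} [Fintype V] [DecidableEq V] [DecidableRel G.Adj]
    {x y a : V} (hsub : ∀ z, G.Adj x z → z = y ∨ z = a) : G.degree x ≤ 2 := by
  have h1 : G.neighborFinset x ⊆ {y, a} := by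
    intro z hz
    rw [mem_neighborFinset] at hz
    rcases hsub z hz with rfl | rfl <;> simp
  calc G.degree x = (G.neighborFinset x).card := rfl
    _ ≤ ({y, a} : Finset V).card := Finset.card_le_card h1
    _ ≤ 2 := Finset.card_insert_le _ _ |>.trans (by simp)


/-- Dirac's lemma: in a minimally 2-connected graph, no cycle has all vertices of
degree `> 2`. -/
lemma no_highdeg_cycle [Fintype V] [DecidableEq V] {G : SimpleGraph V} [DecidableRel G.Adj]
    (h : G.MinimallyTwoConnected) {t : V} (C : G.Walk t t) (hC : C.IsCycle)
    (hdeg : ∀ v ∈ C.support, 2 < G.degree v) : False := by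
  classical
  set I : Set ℕ := {n | ∃ p q u, (G.Adj p q ∧ s(p, q) ∈ C.edges ∧ u ≠ p ∧ u ≠ q ∧
      ¬ Avoid (G.deleteEdges {s(p, q)}) u p q) ∧
      n = {z | Avoid (G.deleteEdges {s(p, q)}) u p z}.ncard} with hIdef
  have hIne : I.Nonempty := by
    have hlen := hC.three_le_length
    have h0 : C.edges ≠ [] := by
      intro hh
      have := C.length_edges
      rw [hh] at this
      simp at this
      omega
    obtain ⟨g, hg⟩ := List.exists_mem_of_ne_nil _ h0
    induction g using Sym2.ind with
    | _ p q =>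
      have hadj : G.Adj p q := C.adj_of_mem_edges hg
      obtain ⟨u, hu1, hu2, hu3⟩ := exists_cutvertex h hadj
      exact ⟨_, p, q, u, ⟨hadj, hg, hu1, hu2, hu3⟩, rfl⟩
  obtain ⟨x, y, w, hPred, hn₀⟩ := Nat.sInf_mem hIne
  obtain ⟨hxy, heC, hwx, hwy, hsep⟩ := hPred
  set e : Sym2 V := s(x, y) with hedef
  set A : Set V := {z | Avoid (G.deleteEdges {e}) w x z} with hAdef
  set B : Set V := {z | Avoid (G.deleteEdges {e}) w y z} with hBdef
  have hminA : ∀ p q u, G.Adj p q → s(p, q) ∈ C.edges → u ≠ p → u ≠ q →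
      ¬ Avoid (G.deleteEdges {s(p, q)}) u p q →
      A.ncard ≤ {z | Avoid (G.deleteEdges {s(p, q)}) u p z}.ncard := by
    intro p q u h1 h2 h3 h4 h5
    rw [← hn₀]
    exact Nat.sInf_le ⟨p, q, u, ⟨h1, h2, h3, h4, h5⟩, rfl⟩
  have hfinish : ∀ p q u, G.Adj p q → s(p, q) ∈ C.edges → u ≠ p → u ≠ q →
      ¬ Avoid (G.deleteEdges {s(p, q)}) u p q →
      {z | Avoid (G.deleteEdges {s(p, q)}) u p z} ⊆ A →
      (∃ z ∈ A, z ∉ {z | Avoid (G.deleteEdges {s(p, q)}) u p z}) → False := by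
    intro p q u h1 h2 h3 h4 h5 hsub ⟨z, hzA, hzS⟩
    have hlt : {z | Avoid (G.deleteEdges {s(p, q)}) u p z}.ncard < A.ncard :=
      Set.ncard_lt_ncard (ssubset_of_subset_not_subset hsub (fun hh => hzS (hh hzA)))
        (Set.toFinite A)
    have := hminA p q u h1 h2 h3 h4 h5
    omega
  have hxA : x ∈ A := Avoid.refl (Ne.symm hwx)
  have hyB : y ∈ B := Avoid.refl (Ne.symm hwy)
  have hyA : y ∉ A := fun hh => hsep hh
  have hxB : x ∉ B := fun hh => hsep hh.symm
  have hABdisj : ∀ v, v ∈ A → v ∈ B → False := fun v hva hvb => hsep (hva.trans hvb.symm)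
  have hwA : w ∉ A := fun hh => (Avoid.ne_right hh) rfl
  have hwB : w ∉ B := fun hh => (Avoid.ne_right hh) rfl
  have hAstep : ∀ v z, v ∈ A → (G.deleteEdges {e}).Adj v z → z ≠ w → z ∈ A :=
    fun v z hv hadj hz => Avoid.step hv hadj hz
  have hBstep : ∀ v z, v ∈ B → (G.deleteEdges {e}).Adj v z → z ≠ w → z ∈ B :=
    fun v z hv hadj hz => Avoid.step hv hadj hz
  have hpart : ∀ v, v ≠ w → v ∈ A ∨ v ∈ B := by
    intro v hvw
    obtain ⟨W, hW⟩ := avoid_of_connected (h.1.2 w) (Ne.symm hwx) hvw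
    have : v ∈ A ∪ B := by
      refine walk_closure W hW (Or.inl hxA) ?_
      intro v' z hv' _ _ hz hadj
      by_cases hg : s(v', z) = e
      · rw [hedef, Sym2.eq_iff] at hg
        rcases hg with ⟨rfl, rfl⟩ | ⟨rfl, rfl⟩
        · exact Or.inr hyB
        · exact Or.inl hxA
      · have hadj' : (G.deleteEdges {e}).Adj v' z := by simp [hadj, hg]
        rcases hv' with hv' | hv'
        · exact Or.inl (hAstep _ _ hv' hadj' hz)
        · exact Or.inr (hBstep _ _ hv' hadj' hz)
    exact this
  -- the path around the cycle
  obtain ⟨P, hPnd, hPe, hPsub⟩ := exists_path_off_edge C hC heC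
  have hPedges : ∀ g ∈ P.edges, g ∈ (G.deleteEdges {e}).edgeSet := by
    intro g hg
    rw [edgeSet_deleteEdges]
    exact ⟨P.edges_subset_edgeSet hg, fun hh => hPe (by rwa [Set.mem_singleton_iff.mp hh] at hg)⟩
  set P' : (G.deleteEdges {e}).Walk x y := P.transfer _ hPedges with hP'def
  have hP'edges : P'.edges = P.edges := P.edges_transfer hPedges
  have hwP : w ∈ P'.support := by
    by_contra hh
    exact hsep ⟨P', hh⟩
  set P₁ : (G.deleteEdges {e}).Walk x w := P'.takeUntil w hwP with hP₁def
  have hcount : P₁.support.count w = 1 := P'.count_support_takeUntil_eq_one hwP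
  have hP₁A : ∀ v ∈ P₁.support, v ≠ w → v ∈ A := fun v hv hvw =>
    avoid_of_count_one P₁ hcount hv hvw
  obtain ⟨a₁, hxa, arc, hP₁eq⟩ := Walk.exists_eq_cons_of_ne (Ne.symm hwx) P₁
  have hP₁edges_sub : ∀ g ∈ P₁.edges, g ∈ P'.edges := fun g hg =>
    P'.edges_takeUntil_subset hwP hg
  set f : Sym2 V := s(x, a₁) with hfdef
  have hfP : f ∈ P.edges := by
    rw [← hP'edges]
    exact hP₁edges_sub _ (by rw [hP₁eq]; simp [hfdef])
  have hfC : f ∈ C.edges := hPsub _ hfP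
  have hGxa : G.Adj x a₁ := ((G.deleteEdges_adj).mp hxa).1
  have ha₁y : a₁ ≠ y := by
    rintro rfl
    exact hPe hfP
  have hfe : f ≠ e := by
    intro hh
    rw [hedef] at hh
    rw [hh] at hfP
    exact hPe hfP
  have ha₁P₁ : a₁ ∈ P₁.support := by rw [hP₁eq]; simp
  have ha₁Aw : a₁ = w ∨ a₁ ∈ A := by
    by_cases hh : a₁ = w
    · exact Or.inl hh
    · exact Or.inr (hP₁A a₁ ha₁P₁ hh)
  have hP₁nd : P₁.edges.Nodup := by
    have h1 : P'.edges.Nodup := by rw [hP'edges]; exact hPnd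
    have hspec := P'.take_spec hwP
    have h2 : (P₁.append (P'.dropUntil w hwP)).edges.Nodup := by rwa [hspec]
    rw [Walk.edges_append] at h2
    exact h2.of_append_left
  have harcf : f ∉ arc.edges := by
    have h1 : P₁.edges = f :: arc.edges := by rw [hP₁eq]; simp [hfdef]
    rw [h1] at hP₁nd
    exact (List.nodup_cons.mp hP₁nd).1
  have harc_support : ∀ v ∈ arc.support, v = w ∨ v ∈ A := by
    intro v hv
    by_cases hh : v = w
    · exact Or.inl hh
    · refine Or.inr (hP₁A v ?_ hh)
      rw [hP₁eq]; simp [hv]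
  -- separation for the edge f
  obtain ⟨w₂, hw₂x, hw₂a, hsep₂⟩ := exists_cutvertex h hGxa
  rw [← hfdef] at hsep₂
  set M : Set V := {z | Avoid (G.deleteEdges {f}) w₂ x z} with hMdef
  set N : Set V := {z | Avoid (G.deleteEdges {f}) w₂ a₁ z} with hNdef
  have hxM : x ∈ M := Avoid.refl (Ne.symm hw₂x)
  have ha₁N : a₁ ∈ N := Avoid.refl (Ne.symm hw₂a)
  have hxN : x ∉ N := fun hh => hsep₂ hh.symm
  have ha₁M : a₁ ∉ M := fun hh => hsep₂ hh
  have hMNdisj : ∀ v, v ∈ M → v ∈ N → False := fun v hvm hvn => hsep₂ (hvm.trans hvn.symm)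
  have hMstep : ∀ v z, v ∈ M → (G.deleteEdges {f}).Adj v z → z ≠ w₂ → z ∈ M :=
    fun v z hv hadj hz => Avoid.step hv hadj hz
  have hNstep : ∀ v z, v ∈ N → (G.deleteEdges {f}).Adj v z → z ≠ w₂ → z ∈ N :=
    fun v z hv hadj hz => Avoid.step hv hadj hz
  have hpart₂ : ∀ v, v ≠ w₂ → v ∈ M ∨ v ∈ N := by
    intro v hvw
    obtain ⟨W, hW⟩ := avoid_of_connected (h.1.2 w₂) (Ne.symm hw₂x) hvw
    have : v ∈ M ∪ N := by
      refine walk_closure W hW (Or.inl hxM) ?_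
      intro v' z hv' _ _ hz hadj
      by_cases hg : s(v', z) = f
      · rw [hfdef, Sym2.eq_iff] at hg
        rcases hg with ⟨rfl, rfl⟩ | ⟨rfl, rfl⟩
        · exact Or.inr ha₁N
        · exact Or.inl hxM
      · have hadj' : (G.deleteEdges {f}).Adj v' z := by simp [hadj, hg]
        rcases hv' with hv' | hv'
        · exact Or.inl (hMstep _ _ hv' hadj' hz)
        · exact Or.inr (hNstep _ _ hv' hadj' hz)
    exact this
  have hswap : s(a₁, x) = f := by rw [hfdef]; exact Sym2.eq_swap
  by_cases hw₂w : w₂ = w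
  · -- CASE I: the new cutvertex is w itself
    have ha₁w : a₁ ≠ w := fun hh => hw₂a (hw₂w.trans hh.symm)
    have ha₁A : a₁ ∈ A := ha₁Aw.resolve_left ha₁w
    have hNsubA : ∀ v ∈ N, v ∈ A := by
      intro v hv
      obtain ⟨W, hW⟩ := hv
      have hxW : x ∉ W.support := by
        intro hxs
        exact hsep₂ (avoid_of_mem_support W hW hxs).symm
      refine walk_closure W hW ha₁A ?_
      intro v' z hv' hv's hzs hz hadj
      have hGvz : G.Adj v' z := ((G.deleteEdges_adj).mp hadj).1
      have hne : s(v', z) ≠ e := by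
        intro hg
        rw [hedef, Sym2.eq_iff] at hg
        rcases hg with ⟨rfl, rfl⟩ | ⟨rfl, rfl⟩
        · exact hxW hv's
        · exact hyA hv'
      have hadj' : (G.deleteEdges {e}).Adj v' z := by simp [hGvz, hne]
      exact hAstep _ _ hv' hadj' (hw₂w ▸ hz)
    refine hfinish a₁ x w (hGxa.symm) (by rw [hswap]; exact hfC)
      (fun hh => hw₂a (hw₂w.trans hh)) hwx ?_ ?_ ?_
    · rw [hswap, ← hw₂w]
      exact fun hh => hsep₂ hh.symm
    · intro v hv
      rw [hswap, ← hw₂w] at hv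
      exact hNsubA v hv
    · refine ⟨x, hxA, ?_⟩
      rw [hswap, ← hw₂w]
      exact hxN
  · by_cases hw₂A : w₂ ∈ A
    · -- CASE II: the new cutvertex lies in A
      have hyw₂ : y ≠ w₂ := fun hh => hyA (hh ▸ hw₂A)
      have hBavoid : ∀ v ∈ B, Avoid (G.deleteEdges {f}) w₂ y v := by
        intro v hv
        obtain ⟨W, hW⟩ := hv
        have hsupB : ∀ z ∈ W.support, z ∈ B := fun z hz => avoid_of_mem_support W hW hz
        have hWedges : ∀ g ∈ W.edges, g ∈ (G.deleteEdges {f}).edgeSet := by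
          intro g hg
          rw [edgeSet_deleteEdges]
          have h1 := W.edges_subset_edgeSet hg
          rw [edgeSet_deleteEdges] at h1
          refine ⟨h1.1, ?_⟩
          intro hgf
          rw [Set.mem_singleton_iff] at hgf
          rw [hgf, hfdef] at hg
          exact hxB (hsupB x (W.fst_mem_support_of_mem_edges hg))
        refine ⟨W.transfer _ hWedges, ?_⟩
        rw [Walk.support_transfer]
        intro hw₂s
        exact hABdisj w₂ hw₂A (hsupB w₂ hw₂s)
      obtain ⟨b₀, hb₀B, hb₀adj⟩ : ∃ b, b ∈ B ∧ (G.deleteEdges {e}).Adj w b := by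
        obtain ⟨v, z, hadj, hvB, hzB⟩ := exists_crossing P' hxB hyB
        by_cases hvw : v = w
        · exact ⟨z, hzB, hvw ▸ hadj⟩
        · exact absurd (hBstep z v hzB hadj.symm hvw) hvB
      have hwadjf : (G.deleteEdges {f}).Adj b₀ w := by
        have hG : G.Adj b₀ w := ((G.deleteEdges_adj).mp hb₀adj).1.symm
        have hne : s(b₀, w) ≠ f := by
          intro hh
          rw [hfdef, Sym2.eq_iff] at hh
          rcases hh with ⟨rfl, rfl⟩ | ⟨hh1, hh2⟩
          · exact hxB hb₀B
          · exact hwx hh2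
        simp [hG, hne]
      have hwavoid : Avoid (G.deleteEdges {f}) w₂ y w :=
        (hBavoid b₀ hb₀B).step hwadjf (Ne.symm hw₂w)
      rcases hpart₂ y hyw₂ with hyM | hyN
      · -- y ∈ M; then N is strictly inside A
        have hBM : ∀ v ∈ B, v ∈ M := fun v hv => hyM.trans (hBavoid v hv)
        have hwM : w ∈ M := hyM.trans hwavoid
        have hNsubA : ∀ v ∈ N, v ∈ A := by
          intro v hv
          have hvw : v ≠ w := fun hh => hMNdisj v (hh ▸ hwM) hv
          rcases hpart v hvw with h1 | h1
          · exact h1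
          · exact absurd hv (fun hvN => hMNdisj v (hBM v h1) hvN)
        refine hfinish a₁ x w₂ (hGxa.symm) (by rw [hswap]; exact hfC) hw₂a hw₂x ?_ ?_ ?_
        · rw [hswap]
          exact fun hh => hsep₂ hh.symm
        · intro v hv
          rw [hswap] at hv
          exact hNsubA v hv
        · refine ⟨w₂, hw₂A, ?_⟩
          rw [hswap]
          exact fun hh => (Avoid.ne_right hh) rfl
      · -- y ∈ N; then M is strictly inside A
        have hBN : ∀ v ∈ B, v ∈ N := fun v hv => hyN.trans (hBavoid v hv)
        have hwN : w ∈ N := hyN.trans hwavoid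
        have hMsubA : ∀ v ∈ M, v ∈ A := by
          intro v hv
          have hvw : v ≠ w := fun hh => hMNdisj v hv (hh ▸ hwN)
          rcases hpart v hvw with h1 | h1
          · exact h1
          · exact absurd hv (fun hvM => hMNdisj v hvM (hBN v h1))
        refine hfinish x a₁ w₂ hGxa (by rw [← hfdef]; exact hfC) hw₂x hw₂a ?_ ?_ ?_
        · rw [← hfdef]
          exact hsep₂
        · intro v hv
          rw [← hfdef] at hv
          exact hMsubA v hv
        · refine ⟨w₂, hw₂A, ?_⟩
          rw [← hfdef]
          exact fun hh => (Avoid.ne_right hh) rfl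
    · -- CASE III: the new cutvertex lies in B
      set Ax : Set V := {v | ∃ W : (G.deleteEdges {f}).Walk x v, ∀ z ∈ W.support, z = w ∨ z ∈ A}
        with hAxdef
      have hxAx : x ∈ Ax := by
        refine ⟨Walk.nil, ?_⟩
        intro z hz
        rw [Walk.support_nil, List.mem_singleton] at hz
        exact hz ▸ Or.inr hxA
      have harcedges : ∀ g ∈ arc.edges, g ∈ (G.deleteEdges {f}).edgeSet := by
        intro g hg
        rw [edgeSet_deleteEdges]
        have h1 := arc.edges_subset_edgeSet hg
        rw [edgeSet_deleteEdges] at h1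
        exact ⟨h1.1, fun hh => harcf (by rwa [Set.mem_singleton_iff.mp hh] at hg)⟩
      by_cases hwAx : w ∈ Ax
      · obtain ⟨Wxw, hWxw⟩ := hwAx
        refine hsep₂ ⟨Wxw.append (arc.transfer _ harcedges).reverse, ?_⟩
        rw [Walk.mem_support_append_iff]
        rintro (hh | hh)
        · rcases hWxw w₂ hh with h1 | h1
          · exact hw₂w h1
          · exact hw₂A h1
        · rw [Walk.support_reverse, List.mem_reverse, Walk.support_transfer] at hh
          rcases harc_support w₂ hh with h1 | h1
          · exact hw₂w h1
          · exact hw₂A h1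
      · have hAxext : ∀ v ∈ Ax, v ≠ x → ∀ z, G.Adj v z → z ∈ Ax := by
          intro v hv hvx z hadj
          obtain ⟨Wv, hWv⟩ := hv
          have hvA : v ∈ A := by
            rcases hWv v Wv.end_mem_support with h1 | h1
            · exact absurd (h1 ▸ (⟨Wv, hWv⟩ : v ∈ Ax)) hwAx
            · exact h1
          by_cases hzx : z = x
          · exact hzx ▸ hxAx
          · have hne_e : s(v, z) ≠ e := by
              intro hg
              rw [hedef, Sym2.eq_iff] at hg
              rcases hg with ⟨rfl, rfl⟩ | ⟨rfl, rfl⟩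
              · exact hvx rfl
              · exact hyA hvA
            have hne_f : s(v, z) ≠ f := by
              intro hg
              rw [hfdef, Sym2.eq_iff] at hg
              rcases hg with ⟨rfl, rfl⟩ | ⟨rfl, rfl⟩
              · exact hvx rfl
              · exact hzx rfl
            have hzAw : z = w ∨ z ∈ A := by
              by_cases hzw : z = w
              · exact Or.inl hzw
              · exact Or.inr (hAstep v z hvA (by simp [hadj, hne_e]) hzw)
            refine ⟨Wv.concat (by simp [hadj, hne_f] :
              (G.deleteEdges {f}).Adj v z), ?_⟩
            intro z' hz'
            rw [Walk.support_concat, List.mem_append,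
              List.mem_singleton] at hz'
            rcases hz' with hz' | rfl
            · exact hWv z' hz'
            · exact hzAw
        by_cases hAxtriv : ∃ v ∈ Ax, v ≠ x
        · obtain ⟨v, hvAx, hvx⟩ := hAxtriv
          obtain ⟨W, hW⟩ := avoid_of_connected (h.1.2 x) hvx hwx
          have hfin : w ∈ {z | z ∈ Ax ∧ z ≠ x} := by
            refine walk_closure W hW ⟨hvAx, hvx⟩ ?_
            intro v' z hv' _ _ hz hadj
            exact ⟨hAxext v' hv'.1 hv'.2 z hadj, hz⟩
          exact hwAx hfin.1
        · push_neg at hAxtriv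
          have hdegx : ∀ z, G.Adj x z → z = y ∨ z = a₁ := by
            intro z hadj
            by_contra hcon
            push_neg at hcon
            obtain ⟨hzy, hza⟩ := hcon
            have hne_e : s(x, z) ≠ e := by
              intro hg
              rw [hedef, Sym2.eq_iff] at hg
              rcases hg with ⟨-, rfl⟩ | ⟨hg1, -⟩
              · exact hzy rfl
              · exact (G.ne_of_adj hxy) hg1
            have hne_f : s(x, z) ≠ f := by
              intro hg
              rw [hfdef, Sym2.eq_iff] at hg
              rcases hg with ⟨-, rfl⟩ | ⟨hg1, -⟩
              · exact hza rfl
              · exact (G.ne_of_adj hGxa) hg1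
            have hzAw : z = w ∨ z ∈ A := by
              by_cases hzw : z = w
              · exact Or.inl hzw
              · exact Or.inr (hAstep x z hxA (by simp [hadj, hne_e]) hzw)
            have hzAx : z ∈ Ax := by
              refine ⟨(by simp [hadj, hne_f] : (G.deleteEdges {f}).Adj x z).toWalk, ?_⟩
              intro z' hz'
              rw [Walk.support_cons, Walk.support_nil, List.mem_cons,
                List.mem_singleton] at hz'
              rcases hz' with rfl | rfl
              · exact Or.inr hxA
              · exact hzAw
            exact (G.ne_of_adj hadj) (hAxtriv z hzAx).symm
          have hxC : x ∈ C.support := C.fst_mem_support_of_mem_edges heC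
          have hd1 := hdeg x hxC
          have hd2 := degree_le_two_of_forall hdegx
          omega


end Halin

open SimpleGraph in
/-- In a minimally `2`-connected simple graph, the subgraph induced by the vertices of
degree exceeding `2` is a forest. -/
theorem stmt_2 {V : Type*} [Fintype V] [DecidableEq V] (G : SimpleGraph V)
    [DecidableRel G.Adj] (h : G.MinimallyTwoConnected) :
    (G.induce {v : V | 2 < G.degree v}).IsAcyclic := by
  intro v c hc
  have hinj : Function.Injective (Embedding.induce (G := G) {v : V | 2 < G.degree v}).toHom :=
    (Embedding.induce (G := G) {v : V | 2 < G.degree v}).injective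
  have hmap : (c.map (Embedding.induce (G := G) {v : V | 2 < G.degree v}).toHom).IsCycle :=
    (Walk.map_isCycle_iff_of_injective hinj).mpr hc
  refine Halin.no_highdeg_cycle h _ hmap ?_
  intro z hz
  rw [Walk.support_map] at hz
  obtain ⟨⟨z', hz'⟩, hmem, rfl⟩ := List.mem_map.mp hz
  exact hz'
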